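/- arXiv:2403.06298 — 2 statements merged into one kernel-verified Lean document; each statement's English description precedes it below -/
import Mathlib

section
/- (Main theorem) Let G = (V, E) be a finite weighted similarity graph with weights A_{i,i'} > 0, let L_i : R^d → R_{≥0} be nonnegative local loss functions, and let {ŵ^(i)}_{i∈V} be a minimizer of the GTVMin objective f(w) = ∑_{i∈V} L_i(w^(i)) + α ∑_{{i,i'}∈E} A_{i,i'} ‖w^(i) − w^(i')‖² with α > 0. Suppose C ⊆ V is a cluster for which there exists w̄ ∈ R^d with ∑_{i∈C} L_i(w̄) ≤ ε, and suppose ‖ŵ^(i)‖ ≤ R for all i ∉ C. Let λ₂ > 0 be the second smallest eigenvalue of the Laplacian of the subgraph induced on C, and bd(C) the total weight of edges crossing the boundary of C. Then ∑_{i∈C} ‖ŵ^(i) − avg_C‖² ≤ (1/(α λ₂)) [ ε + 2 α bd(C) ( ‖w̄‖² + R² ) ], where avg_C = (1/|C|) ∑_{i∈C} ŵ^(i). -/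
open Finset Matrix

lemma spectral_aux {m : ℕ} {ι : Type*} [Fintype ι] [DecidableEq ι]
    (B : ι → ι → ℝ) (hBsym : ∀ a b, B a b = B b a)
    (LC : Matrix ι ι ℝ)
    (hLC : ∀ a b, LC a b = if a = b then ∑ c ∈ Finset.univ.erase a, B a c else -B a b)
    (hm : Fintype.card ι = m)
    (μ : Fin m → ℝ) (u : Fin m → (ι → ℝ))
    (hmono : Monotone μ)
    (horth : ∀ j k, u j ⬝ᵥ u k = if j = k then (1:ℝ) else 0)
    (heig : ∀ j, LC *ᵥ u j = μ j • u j)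
    (lam₂ : ℝ) (h1 : 1 < m) (hlam₂ : lam₂ = μ ⟨1, h1⟩) (hpos : 0 < lam₂)
    (x : ι → ℝ) :
    2 * lam₂ * ∑ a, (x a - (∑ b, x b) / m) ^ 2 ≤ ∑ a, ∑ b, B a b * (x a - x b) ^ 2 := by
  have hm0 : (0:ℕ) < m := by omega
  set σ : ι ≃ Fin m := Fintype.equivFinOfCardEq hm with hσ
  set v : ι → ι → ℝ := fun a => u (σ a) with hv
  set ν : ι → ℝ := fun a => μ (σ a) with hν
  -- mulVec formula
  have hmv : ∀ (y : ι → ℝ) (a : ι), (LC *ᵥ y) a = ∑ b, B a b * (y a - y b) := by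
    intro y a
    have : (LC *ᵥ y) a = ∑ b, LC a b * y b := rfl
    rw [this, ← Finset.add_sum_erase _ _ (Finset.mem_univ a),
        ← Finset.add_sum_erase _ (fun b => B a b * (y a - y b)) (Finset.mem_univ a)]
    have h1' : LC a a * y a = (∑ c ∈ Finset.univ.erase a, B a c) * y a := by
      rw [hLC]; simp
    rw [h1', Finset.sum_mul]
    have h2' : ∑ b ∈ Finset.univ.erase a, LC a b * y b
        = ∑ b ∈ Finset.univ.erase a, (-B a b) * y b := by
      refine Finset.sum_congr rfl fun b hb => ?_
      rw [hLC]
      simp [Finset.ne_of_mem_erase hb, (Finset.ne_of_mem_erase hb : b ≠ a).symm]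
    rw [h2', ← Finset.sum_add_distrib]
    have hz : B a a * (y a - y a) = 0 := by ring
    rw [hz, zero_add]
    exact Finset.sum_congr rfl fun b hb => by ring
  -- orthonormality, reindexed
  have horth' : ∀ a b, v a ⬝ᵥ v b = if a = b then (1:ℝ) else 0 := by
    intro a b
    rw [hv]
    simp only []
    rw [horth]
    simp [Equiv.apply_eq_iff_eq]
  -- Parseval
  have parseval : ∀ p q : ι → ℝ, p ⬝ᵥ q = ∑ a, (v a ⬝ᵥ p) * (v a ⬝ᵥ q) := by
    intro p q
    set U : Matrix ι ι ℝ := Matrix.of v with hU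
    have hUUt : U * Uᵀ = 1 := by
      ext a b
      rw [Matrix.mul_apply, Matrix.one_apply]
      rw [← horth' a b]
      rfl
    have hUtU : Uᵀ * U = 1 := mul_eq_one_comm.mp hUUt
    have key : p ⬝ᵥ q = (U *ᵥ p) ⬝ᵥ (U *ᵥ q) := by
      conv_lhs => rw [show q = (Uᵀ * U) *ᵥ q by rw [hUtU, Matrix.one_mulVec]]
      rw [← Matrix.mulVec_mulVec, Matrix.dotProduct_mulVec, Matrix.vecMul_transpose]
    rw [key]
    rfl
  -- eigen-dot
  have heigdot : ∀ (a : ι) (y : ι → ℝ), v a ⬝ᵥ (LC *ᵥ y) = ν a * (v a ⬝ᵥ y) := by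
    intro a y
    have hsymLC : LCᵀ = LC := by
      ext i j
      rw [Matrix.transpose_apply, hLC, hLC, hBsym]
      rcases eq_or_ne i j with h | h
      · subst h; rfl
      · simp [h, h.symm, hBsym]
    rw [Matrix.dotProduct_mulVec, ← Matrix.mulVec_transpose, hsymLC, hv]
    simp only []
    rw [heig]
    rw [smul_dotProduct]
    rfl
  -- the all-ones vector
  set ones : ι → ℝ := fun _ => (1:ℝ) with hones
  have hker : LC *ᵥ ones = 0 := by
    funext a
    rw [hmv ones a]
    simp [hones]
  set a₀ : ι := σ.symm ⟨0, hm0⟩ with ha₀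
  have hone : ∀ a : ι, a ≠ a₀ → v a ⬝ᵥ ones = 0 := by
    intro a ha
    have h0 : v a ⬝ᵥ (LC *ᵥ ones) = ν a * (v a ⬝ᵥ ones) := heigdot a ones
    rw [hker, dotProduct_zero] at h0
    have hge : lam₂ ≤ ν a := by
      rw [hlam₂]
      apply hmono
      have hσa : (σ a).val ≠ 0 := by
        intro h
        have he : σ a = ⟨0, hm0⟩ := Fin.ext h
        exact ha (by rw [ha₀, ← he, Equiv.symm_apply_apply])
      exact Fin.le_def.mpr (show (1:ℕ) ≤ (σ a).val by omega)
    have hν0 : ν a ≠ 0 := by linarith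
    exact (mul_eq_zero.mp h0.symm).resolve_left hν0
  -- the centered vector
  set yv : ι → ℝ := fun a => x a - (∑ b, x b) / m with hyv
  have hsum1 : ∀ p : ι → ℝ, ones ⬝ᵥ p = ∑ a, p a := by
    intro p
    simp [dotProduct, hones]
  have hysum : ones ⬝ᵥ yv = 0 := by
    rw [hsum1]
    simp only [hyv]
    rw [Finset.sum_sub_distrib, Finset.sum_const, Finset.card_univ, hm]
    have : (m:ℝ) ≠ 0 := Nat.cast_ne_zero.mpr (by omega)
    rw [nsmul_eq_mul]
    field_simp
    ring
  have ha₀one : (v a₀ ⬝ᵥ ones) ^ 2 = m := by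
    have h1' : ones ⬝ᵥ ones = (m:ℝ) := by
      rw [hsum1]; simp [hones, Finset.card_univ, hm]
    have h2' := parseval ones ones
    rw [h1'] at h2'
    rw [Finset.sum_eq_single a₀ (fun b _ hb => by rw [hone b hb]; ring)
      (fun h => absurd (Finset.mem_univ a₀) h)] at h2'
    rw [sq]; linarith
  have ha₀y : v a₀ ⬝ᵥ yv = 0 := by
    have h2' := parseval ones yv
    rw [hysum] at h2'
    rw [Finset.sum_eq_single a₀ (fun b _ hb => by rw [hone b hb]; ring)
      (fun h => absurd (Finset.mem_univ a₀) h)] at h2'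
    have hne : v a₀ ⬝ᵥ ones ≠ 0 := by
      intro h
      rw [h] at ha₀one
      have hm' : (m:ℝ) = 0 := by rw [← ha₀one]; ring
      exact (Nat.cast_ne_zero.mpr (by omega : m ≠ 0)) hm'
    exact (mul_eq_zero.mp h2'.symm).resolve_left hne
  -- quadratic form
  set Q : ℝ := yv ⬝ᵥ (LC *ᵥ yv) with hQ
  have hQ1 : Q = ∑ a, ν a * (v a ⬝ᵥ yv) ^ 2 := by
    rw [hQ, parseval yv (LC *ᵥ yv)]
    exact Finset.sum_congr rfl fun a _ => by rw [heigdot a yv]; ring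
  have hnorm : ∑ a, yv a ^ 2 = ∑ a, (v a ⬝ᵥ yv) ^ 2 := by
    have := parseval yv yv
    rw [dotProduct] at this
    calc ∑ a, yv a ^ 2 = ∑ a, yv a * yv a := by simp [sq]
      _ = ∑ a, (v a ⬝ᵥ yv) * (v a ⬝ᵥ yv) := this
      _ = ∑ a, (v a ⬝ᵥ yv) ^ 2 := by simp [sq]
  have hdiff : ∀ a b : ι, yv a - yv b = x a - x b := by
    intro a b; simp only [hyv]; ring
  have hQform : Q = ∑ a, ∑ b, B a b * (x a - x b) * yv a := by
    have h0 : Q = ∑ a, yv a * (LC *ᵥ yv) a := rfl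
    rw [h0]
    refine Finset.sum_congr rfl fun a _ => ?_
    rw [hmv yv a, Finset.mul_sum]
    refine Finset.sum_congr rfl fun b _ => ?_
    rw [hdiff a b]; ring
  have hswap : ∑ a, ∑ b, B a b * (x a - x b) * yv b
      = - ∑ a, ∑ b, B a b * (x a - x b) * yv a := by
    rw [Finset.sum_comm, ← Finset.sum_neg_distrib]
    refine Finset.sum_congr rfl fun i _ => ?_
    rw [← Finset.sum_neg_distrib]
    refine Finset.sum_congr rfl fun j _ => ?_
    rw [hBsym j i]; ring
  have hQ2 : ∑ a, ∑ b, B a b * (x a - x b) ^ 2 = 2 * Q := by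
    have hterm : ∀ a b : ι, B a b * (x a - x b) ^ 2
        = B a b * (x a - x b) * yv a - B a b * (x a - x b) * yv b := by
      intro a b
      linear_combination (B a b * (x a - x b)) * hdiff a b
    calc ∑ a, ∑ b, B a b * (x a - x b) ^ 2
        = ∑ a, ∑ b, (B a b * (x a - x b) * yv a - B a b * (x a - x b) * yv b) :=
          Finset.sum_congr rfl fun a _ => Finset.sum_congr rfl fun b _ => hterm a b
      _ = (∑ a, ∑ b, B a b * (x a - x b) * yv a)
          - ∑ a, ∑ b, B a b * (x a - x b) * yv b := by
          rw [← Finset.sum_sub_distrib]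
          exact Finset.sum_congr rfl fun a _ => by rw [Finset.sum_sub_distrib]
      _ = 2 * Q := by rw [hswap, hQform]; ring
  -- final comparison
  have hcomp : lam₂ * ∑ a, (v a ⬝ᵥ yv) ^ 2 ≤ Q := by
    rw [hQ1, Finset.mul_sum]
    refine Finset.sum_le_sum fun a _ => ?_
    rcases eq_or_ne a a₀ with h | h
    · subst h; rw [ha₀y]; ring_nf; exact le_refl _
    · have hge : lam₂ ≤ ν a := by
        rw [hlam₂]
        apply hmono
        have hσa : (σ a).val ≠ 0 := by
          intro hh
          have he : σ a = ⟨0, hm0⟩ := Fin.ext hh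
          exact h (by rw [ha₀, ← he, Equiv.symm_apply_apply])
        exact Fin.le_def.mpr (show (1:ℕ) ≤ (σ a).val by omega)
      exact mul_le_mul_of_nonneg_right hge (sq_nonneg _)
  have hLHS : ∑ a, (x a - (∑ b, x b) / m) ^ 2 = ∑ a, yv a ^ 2 := rfl
  rw [hLHS, hQ2, hnorm]
  linarith

set_option maxHeartbeats 2000000 in
/-- **Main theorem.** Let `ŵ` be a minimizer of the GTVMin objective
`f(w) = ∑_i L_i(w^(i)) + α ∑_{{i,i'}∈E} A_{i,i'}‖w^(i) − w^(i')‖²` (each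
unordered edge counted once) over a weighted similarity graph with symmetric
nonnegative weights `A` and nonnegative local losses `L_i`, with `α > 0`.
Suppose the cluster `C` satisfies `∑_{i∈C} L_i(w̄) ≤ ε` for some `w̄ ∈ ℝ^d`,
and `‖ŵ^(i)‖ ≤ R` for all `i ∉ C`.  Let `lam₂` be the second smallest
eigenvalue of the Laplacian `LC` of the subgraph induced on `C` (eigenvalues
`μ` in nondecreasing order, orthonormal eigenbasis `u`), and let `bd(C)` be the
total weight of boundary edges of `C`. Then
`∑_{i∈C} ‖ŵ^(i) − avg_C‖² ≤ (1/(α·lam₂)) (ε + 2 α bd(C) (‖w̄‖² + R²))`. -/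
theorem stmt_6 {n d : ℕ} (A : Fin n → Fin n → ℝ)
    (hsym : ∀ i i', A i i' = A i' i) (hnonneg : ∀ i i', 0 ≤ A i i')
    (hdiag : ∀ i, A i i = 0)
    (ℒ : Fin n → EuclideanSpace ℝ (Fin d) → ℝ)
    (hℒ : ∀ i x, 0 ≤ ℒ i x)
    (α : ℝ) (hα : 0 < α)
    (f : (Fin n → EuclideanSpace ℝ (Fin d)) → ℝ)
    (hf : ∀ w, f w = ∑ i, ℒ i (w i) +
      α * ∑ i, ∑ i', if i < i' then A i i' * ‖w i - w i'‖ ^ 2 else 0)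
    (what : Fin n → EuclideanSpace ℝ (Fin d))
    (hmin : ∀ w, f what ≤ f w)
    (C : Finset (Fin n)) (hC : 1 < C.card)
    (wbar : EuclideanSpace ℝ (Fin d)) (ε : ℝ)
    (hε : ∑ i ∈ C, ℒ i wbar ≤ ε)
    (R : ℝ) (hR : ∀ i ∉ C, ‖what i‖ ≤ R)
    -- Laplacian of the subgraph induced on `C`:
    (LC : Matrix {x // x ∈ C} {x // x ∈ C} ℝ)
    (hLC : ∀ a b : {x // x ∈ C}, LC a b =
      if a = b then ∑ c ∈ Finset.univ.erase a, A a.1 c.1 else -A a.1 b.1)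
    -- eigenvalues `μ` of `LC` in nondecreasing order with orthonormal eigenbasis `u`:
    (μ : Fin C.card → ℝ) (u : Fin C.card → ({x // x ∈ C} → ℝ))
    (hmono : Monotone μ)
    (horth : ∀ j k, u j ⬝ᵥ u k = if j = k then (1 : ℝ) else 0)
    (heig : ∀ j, LC *ᵥ u j = μ j • u j)
    (lam₂ : ℝ) (hlam₂ : lam₂ = μ ⟨1, hC⟩) (hlam₂pos : 0 < lam₂)
    (bd : ℝ) (hbd : bd = ∑ i ∈ C, ∑ i' ∈ Cᶜ, A i i') :
    ∑ i ∈ C, ‖what i - (C.card : ℝ)⁻¹ • ∑ i' ∈ C, what i'‖ ^ 2 ≤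
      (1 / (α * lam₂)) * (ε + 2 * α * bd * (‖wbar‖ ^ 2 + R ^ 2)) := by
  classical
  have hm0 : (0:ℕ) < C.card := by omega
  -- squared norm as coordinate sum
  have hnormsq : ∀ v : EuclideanSpace ℝ (Fin d), ‖v‖^2 = ∑ t, (v t)^2 := by
    intro v
    rw [EuclideanSpace.norm_eq, Real.sq_sqrt (by positivity)]
    simp [sq_abs]
  -- each unordered edge counted once = half the full double sum
  have hhalf : ∀ w : Fin n → EuclideanSpace ℝ (Fin d),
      (∑ i, ∑ i', if i < i' then A i i' * ‖w i - w i'‖^2 else 0)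
        = (∑ i, ∑ i', A i i' * ‖w i - w i'‖^2) / 2 := by
    intro w
    have hsplit : ∀ i i' : Fin n, A i i' * ‖w i - w i'‖^2
        = (if i < i' then A i i' * ‖w i - w i'‖^2 else 0)
          + (if i' < i then A i i' * ‖w i - w i'‖^2 else 0) := by
      intro i i'
      rcases lt_trichotomy i i' with h | h | h
      · simp [h, asymm h]
      · subst h; simp [hdiag i]
      · simp [h, asymm h]
    have hTsum : (∑ i, ∑ i', A i i' * ‖w i - w i'‖^2)
        = (∑ i, ∑ i', if i < i' then A i i' * ‖w i - w i'‖^2 else 0)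
          + (∑ i, ∑ i', if i' < i then A i i' * ‖w i - w i'‖^2 else 0) := by
      calc (∑ i, ∑ i', A i i' * ‖w i - w i'‖^2)
          = ∑ i, ∑ i', ((if i < i' then A i i' * ‖w i - w i'‖^2 else 0)
            + (if i' < i then A i i' * ‖w i - w i'‖^2 else 0)) :=
            Finset.sum_congr rfl fun i _ => Finset.sum_congr rfl fun i' _ => hsplit i i'
        _ = _ := by simp only [Finset.sum_add_distrib]
    have hSS : (∑ i, ∑ i', if i' < i then A i i' * ‖w i - w i'‖^2 else 0)
        = (∑ i, ∑ i', if i < i' then A i i' * ‖w i - w i'‖^2 else 0) := by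
      rw [Finset.sum_comm]
      refine Finset.sum_congr rfl fun a _ => Finset.sum_congr rfl fun b _ => ?_
      rw [hsym b a, norm_sub_rev (w b) (w a)]
    rw [hTsum, hSS]; ring
  -- splitting the full double sum into the four blocks
  have hsplitw : ∀ w : Fin n → EuclideanSpace ℝ (Fin d),
      (∑ i, ∑ i', A i i' * ‖w i - w i'‖^2)
        = ((∑ i ∈ C, ∑ i' ∈ C, A i i' * ‖w i - w i'‖^2)
            + ∑ i ∈ C, ∑ i' ∈ Cᶜ, A i i' * ‖w i - w i'‖^2)
          + ((∑ i ∈ Cᶜ, ∑ i' ∈ C, A i i' * ‖w i - w i'‖^2)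
            + ∑ i ∈ Cᶜ, ∑ i' ∈ Cᶜ, A i i' * ‖w i - w i'‖^2) := by
    intro w
    rw [← Finset.sum_add_sum_compl C (fun i => ∑ i', A i i' * ‖w i - w i'‖^2)]
    congr 1
    · calc ∑ i ∈ C, ∑ i', A i i' * ‖w i - w i'‖^2
          = ∑ i ∈ C, ((∑ i' ∈ C, A i i' * ‖w i - w i'‖^2)
              + ∑ i' ∈ Cᶜ, A i i' * ‖w i - w i'‖^2) :=
            Finset.sum_congr rfl fun i _ =>
              (Finset.sum_add_sum_compl C (fun i' => A i i' * ‖w i - w i'‖^2)).symm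
        _ = _ := Finset.sum_add_distrib
    · calc ∑ i ∈ Cᶜ, ∑ i', A i i' * ‖w i - w i'‖^2
          = ∑ i ∈ Cᶜ, ((∑ i' ∈ C, A i i' * ‖w i - w i'‖^2)
              + ∑ i' ∈ Cᶜ, A i i' * ‖w i - w i'‖^2) :=
            Finset.sum_congr rfl fun i _ =>
              (Finset.sum_add_sum_compl C (fun i' => A i i' * ‖w i - w i'‖^2)).symm
        _ = _ := Finset.sum_add_distrib
  -- the comparison vector
  set wt : Fin n → EuclideanSpace ℝ (Fin d) :=
    fun i => if i ∈ C then wbar else what i with hwt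
  have hCC0 : ∑ i ∈ C, ∑ i' ∈ C, A i i' * ‖wt i - wt i'‖^2 = 0 :=
    Finset.sum_eq_zero fun i hi => Finset.sum_eq_zero fun i' hi' => by
      simp [hwt, hi, hi']
  have hCc : ∑ i ∈ C, ∑ i' ∈ Cᶜ, A i i' * ‖wt i - wt i'‖^2
      = ∑ i ∈ C, ∑ i' ∈ Cᶜ, A i i' * ‖wbar - what i'‖^2 :=
    Finset.sum_congr rfl fun i hi => Finset.sum_congr rfl fun i' hi' => by
      simp [hwt, hi, Finset.mem_compl.mp hi']
  have hcC : ∑ i ∈ Cᶜ, ∑ i' ∈ C, A i i' * ‖wt i - wt i'‖^2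
      = ∑ i ∈ Cᶜ, ∑ i' ∈ C, A i i' * ‖what i - wbar‖^2 :=
    Finset.sum_congr rfl fun i hi => Finset.sum_congr rfl fun i' hi' => by
      simp [hwt, hi', Finset.mem_compl.mp hi]
  have hcc : ∑ i ∈ Cᶜ, ∑ i' ∈ Cᶜ, A i i' * ‖wt i - wt i'‖^2
      = ∑ i ∈ Cᶜ, ∑ i' ∈ Cᶜ, A i i' * ‖what i - what i'‖^2 :=
    Finset.sum_congr rfl fun i hi => Finset.sum_congr rfl fun i' hi' => by
      simp [hwt, Finset.mem_compl.mp hi, Finset.mem_compl.mp hi']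
  have hLwt : ∑ i, ℒ i (wt i) = ∑ i ∈ C, ℒ i wbar + ∑ i ∈ Cᶜ, ℒ i (what i) := by
    rw [← Finset.sum_add_sum_compl C (fun i => ℒ i (wt i))]
    congr 1
    · exact Finset.sum_congr rfl fun i hi => by simp [hwt, hi]
    · exact Finset.sum_congr rfl fun i hi => by simp [hwt, Finset.mem_compl.mp hi]
  -- optimality inequality
  have hmain := hmin wt
  rw [hf what, hf wt, hhalf what, hhalf wt, hsplitw what, hsplitw wt,
      hCC0, hCc, hcC, hcc, hLwt, zero_add,
      ← Finset.sum_add_sum_compl C (fun i => ℒ i (what i))] at hmain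
  -- boundary bounds
  have hb1 : ∑ i ∈ C, ∑ i' ∈ Cᶜ, A i i' * ‖wbar - what i'‖^2
      ≤ 2 * bd * (‖wbar‖^2 + R^2) := by
    calc ∑ i ∈ C, ∑ i' ∈ Cᶜ, A i i' * ‖wbar - what i'‖^2
        ≤ ∑ i ∈ C, ∑ i' ∈ Cᶜ, A i i' * (2 * (‖wbar‖^2 + R^2)) := by
          refine Finset.sum_le_sum fun i _ => Finset.sum_le_sum fun i' hi' => ?_
          refine mul_le_mul_of_nonneg_left ?_ (hnonneg i i')
          have hRi := hR i' (Finset.mem_compl.mp hi')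
          nlinarith [norm_sub_le wbar (what i'), norm_nonneg (wbar - what i'),
            norm_nonneg (what i'), norm_nonneg wbar, sq_nonneg (‖wbar‖ - ‖what i'‖)]
      _ = 2 * bd * (‖wbar‖^2 + R^2) := by
          simp only [← Finset.sum_mul]
          rw [hbd]; ring
  have hbd' : ∑ i ∈ Cᶜ, ∑ i' ∈ C, A i i' = bd := by
    rw [hbd, Finset.sum_comm]
    exact Finset.sum_congr rfl fun a _ => Finset.sum_congr rfl fun b _ => hsym b a
  have hb2 : ∑ i ∈ Cᶜ, ∑ i' ∈ C, A i i' * ‖what i - wbar‖^2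
      ≤ 2 * bd * (‖wbar‖^2 + R^2) := by
    calc ∑ i ∈ Cᶜ, ∑ i' ∈ C, A i i' * ‖what i - wbar‖^2
        ≤ ∑ i ∈ Cᶜ, ∑ i' ∈ C, A i i' * (2 * (‖wbar‖^2 + R^2)) := by
          refine Finset.sum_le_sum fun i hi => Finset.sum_le_sum fun i' _ => ?_
          refine mul_le_mul_of_nonneg_left ?_ (hnonneg i i')
          have hRi := hR i (Finset.mem_compl.mp hi)
          nlinarith [norm_sub_le (what i) wbar, norm_nonneg (what i - wbar),
            norm_nonneg (what i), norm_nonneg wbar, sq_nonneg (‖wbar‖ - ‖what i‖)]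
      _ = 2 * bd * (‖wbar‖^2 + R^2) := by
          simp only [← Finset.sum_mul]
          rw [hbd']; ring
  -- nonnegativity facts
  have hLA : 0 ≤ ∑ i ∈ C, ℒ i (what i) :=
    Finset.sum_nonneg fun i _ => hℒ i (what i)
  have hcr1 : 0 ≤ ∑ i ∈ C, ∑ i' ∈ Cᶜ, A i i' * ‖what i - what i'‖^2 :=
    Finset.sum_nonneg fun i _ => Finset.sum_nonneg fun i' _ =>
      mul_nonneg (hnonneg i i') (sq_nonneg _)
  have hcr2 : 0 ≤ ∑ i ∈ Cᶜ, ∑ i' ∈ C, A i i' * ‖what i - what i'‖^2 :=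
    Finset.sum_nonneg fun i _ => Finset.sum_nonneg fun i' _ =>
      mul_nonneg (hnonneg i i') (sq_nonneg _)
  -- abbreviations for the key sums
  set TCC : ℝ := ∑ i ∈ C, ∑ i' ∈ C, A i i' * ‖what i - what i'‖^2 with hTCC
  set Tcc : ℝ := ∑ i ∈ Cᶜ, ∑ i' ∈ Cᶜ, A i i' * ‖what i - what i'‖^2 with hTcc
  set TCc : ℝ := ∑ i ∈ C, ∑ i' ∈ Cᶜ, A i i' * ‖what i - what i'‖^2 with hTCcd
  set TcC : ℝ := ∑ i ∈ Cᶜ, ∑ i' ∈ C, A i i' * ‖what i - what i'‖^2 with hTcCd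
  set TCc' : ℝ := ∑ i ∈ C, ∑ i' ∈ Cᶜ, A i i' * ‖wbar - what i'‖^2 with hTCc'
  set TcC' : ℝ := ∑ i ∈ Cᶜ, ∑ i' ∈ C, A i i' * ‖what i - wbar‖^2 with hTcC'
  have hmul1 : α * ((TCC + Tcc) / 2) ≤ α * (((TCC + TCc) + (TcC + Tcc)) / 2) :=
    mul_le_mul_of_nonneg_left (by linarith) hα.le
  have hmul2 : α * ((TCc' + (TcC' + Tcc)) / 2)
      ≤ α * ((2 * bd * (‖wbar‖^2 + R^2) + (2 * bd * (‖wbar‖^2 + R^2) + Tcc)) / 2) :=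
    mul_le_mul_of_nonneg_left (by linarith) hα.le
  have hring : α * ((2 * bd * (‖wbar‖^2 + R^2) + (2 * bd * (‖wbar‖^2 + R^2) + Tcc)) / 2)
      - α * ((TCC + Tcc) / 2) = 2 * α * bd * (‖wbar‖^2 + R^2) - α / 2 * TCC := by ring
  have hopt : α / 2 * TCC ≤ ε + 2 * α * bd * (‖wbar‖^2 + R^2) := by
    linarith [hmain, hLA, hε, hmul1, hmul2, hring]
  -- spectral inequality, coordinatewise
  have hspec : ∀ t : Fin d,
      2 * lam₂ * ∑ a : {x // x ∈ C},
        ((what a.1) t - (∑ b : {x // x ∈ C}, (what b.1) t) / (C.card : ℝ))^2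
      ≤ ∑ a : {x // x ∈ C}, ∑ b : {x // x ∈ C},
          A a.1 b.1 * ((what a.1) t - (what b.1) t)^2 :=
    fun t => spectral_aux (fun a b => A a.1 b.1) (fun a b => hsym a.1 b.1)
      LC hLC (Fintype.card_coe C) μ u hmono horth heig lam₂ hC hlam₂ hlam₂pos
      (fun a => what a.1 t)
  -- rewrite the goal's left-hand side coordinatewise
  have hLHS : ∑ i ∈ C, ‖what i - (C.card : ℝ)⁻¹ • ∑ i' ∈ C, what i'‖ ^ 2
      = ∑ t, ∑ a : {x // x ∈ C},
          ((what a.1) t - (∑ b : {x // x ∈ C}, (what b.1) t) / (C.card : ℝ))^2 := by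
    calc ∑ i ∈ C, ‖what i - (C.card : ℝ)⁻¹ • ∑ i' ∈ C, what i'‖ ^ 2
        = ∑ i ∈ C, ∑ t, (what i t - (∑ i' ∈ C, what i' t) / (C.card : ℝ))^2 := by
          refine Finset.sum_congr rfl fun i _ => ?_
          rw [hnormsq]
          refine Finset.sum_congr rfl fun t _ => ?_
          have h1 : (what i - (C.card : ℝ)⁻¹ • ∑ i' ∈ C, what i') t
              = what i t - (C.card : ℝ)⁻¹ * ((∑ i' ∈ C, what i') t) := rfl
          rw [h1, WithLp.ofLp_sum, Finset.sum_apply t C (fun i => (what i).ofLp)]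
          ring_nf
      _ = ∑ t, ∑ i ∈ C, (what i t - (∑ i' ∈ C, what i' t) / (C.card : ℝ))^2 :=
          Finset.sum_comm
      _ = ∑ t, ∑ a : {x // x ∈ C},
            ((what a.1) t - (∑ b : {x // x ∈ C}, (what b.1) t) / (C.card : ℝ))^2 := by
          refine Finset.sum_congr rfl fun t _ => ?_
          rw [show (∑ b : {x // x ∈ C}, (what b.1) t) = ∑ i' ∈ C, what i' t from
            Finset.sum_coe_sort C (fun i => what i t)]
          exact (Finset.sum_coe_sort C
            (fun i => (what i t - (∑ i' ∈ C, what i' t) / (C.card : ℝ))^2)).symm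
  -- rewrite the energy coordinatewise
  have hRHS : ∑ t, ∑ a : {x // x ∈ C}, ∑ b : {x // x ∈ C},
        A a.1 b.1 * ((what a.1) t - (what b.1) t)^2 = TCC := by
    calc ∑ t, ∑ a : {x // x ∈ C}, ∑ b : {x // x ∈ C},
          A a.1 b.1 * ((what a.1) t - (what b.1) t)^2
        = ∑ t, ∑ i ∈ C, ∑ i' ∈ C, A i i' * (what i t - what i' t)^2 := by
          refine Finset.sum_congr rfl fun t _ => ?_
          rw [← Finset.sum_coe_sort C
            (fun i => ∑ i' ∈ C, A i i' * (what i t - what i' t)^2)]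
          exact Finset.sum_congr rfl fun a _ =>
            Finset.sum_coe_sort C (fun i' => A a.1 i' * ((what a.1) t - what i' t)^2)
      _ = ∑ i ∈ C, ∑ t, ∑ i' ∈ C, A i i' * (what i t - what i' t)^2 :=
          Finset.sum_comm
      _ = ∑ i ∈ C, ∑ i' ∈ C, ∑ t, A i i' * (what i t - what i' t)^2 :=
          Finset.sum_congr rfl fun i _ => Finset.sum_comm
      _ = TCC := by
          rw [hTCC]
          refine Finset.sum_congr rfl fun i _ => Finset.sum_congr rfl fun i' _ => ?_
          rw [hnormsq, Finset.mul_sum]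
          exact Finset.sum_congr rfl fun t _ => rfl
  -- combine
  have hsums : 2 * lam₂ * (∑ i ∈ C, ‖what i - (C.card : ℝ)⁻¹ • ∑ i' ∈ C, what i'‖ ^ 2)
      ≤ TCC := by
    calc 2 * lam₂ * (∑ i ∈ C, ‖what i - (C.card : ℝ)⁻¹ • ∑ i' ∈ C, what i'‖ ^ 2)
        = ∑ t, 2 * lam₂ * ∑ a : {x // x ∈ C},
            ((what a.1) t - (∑ b : {x // x ∈ C}, (what b.1) t) / (C.card : ℝ))^2 := by
          rw [hLHS, Finset.mul_sum]
      _ ≤ ∑ t, ∑ a : {x // x ∈ C}, ∑ b : {x // x ∈ C},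
            A a.1 b.1 * ((what a.1) t - (what b.1) t)^2 :=
          Finset.sum_le_sum fun t _ => hspec t
      _ = TCC := hRHS
  have hpos2 : (0:ℝ) < α * lam₂ := mul_pos hα hlam₂pos
  rw [one_div, inv_mul_eq_div, le_div_iff₀ hpos2]
  calc (∑ i ∈ C, ‖what i - (C.card : ℝ)⁻¹ • ∑ i' ∈ C, what i'‖ ^ 2) * (α * lam₂)
      = α / 2 * (2 * lam₂ * ∑ i ∈ C, ‖what i - (C.card : ℝ)⁻¹ • ∑ i' ∈ C, what i'‖ ^ 2) := by
        ring
    _ ≤ α / 2 * TCC := mul_le_mul_of_nonneg_left hsums (by positivity)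
    _ ≤ ε + 2 * α * bd * (‖wbar‖^2 + R^2) := hopt
end

section
/- (Single-cluster specialization) Under the setting of GTVMin, if C = V (all nodes form one cluster satisfying ∑_{i∈V} L_i(w̄) ≤ ε for some w̄) and the graph is connected with Laplacian second eigenvalue λ₂ > 0, then any minimizer {ŵ^(i)} of the GTVMin objective satisfies ∑_{i∈V} ‖ŵ^(i) − avg‖² ≤ ε / (α λ₂), where avg = (1/n) ∑_{i∈V} ŵ^(i). In particular the deviation from the average can be made arbitrarily small by increasing α. -/
open Finset Matrix

section Aux

variable {n : ℕ}

/-- Expansion of a vector in an orthonormal family of full cardinality. -/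
lemma aux_expand (hn : 0 < n) (u : Fin n → (Fin n → ℝ))
    (horth : ∀ j k, u j ⬝ᵥ u k = if j = k then (1 : ℝ) else 0)
    (x : Fin n → ℝ) : x = ∑ j, (u j ⬝ᵥ x) • u j := by
  haveI : Nonempty (Fin n) := ⟨⟨0, hn⟩⟩
  let v : Fin n → EuclideanSpace ℝ (Fin n) := fun j => WithLp.toLp 2 (u j)
  have hon : Orthonormal ℝ v := by
    rw [orthonormal_iff_ite]
    intro j k
    simpa [v, PiLp.inner_apply, RCLike.inner_apply, dotProduct, mul_comm] using horth j k
  let b := basisOfLinearIndependentOfCardEqFinrank hon.linearIndependent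
    (by simp [finrank_euclideanSpace])
  have hb : ⇑b = v := coe_basisOfLinearIndependentOfCardEqFinrank _ _
  let B : OrthonormalBasis (Fin n) ℝ (EuclideanSpace ℝ (Fin n)) :=
    b.toOrthonormalBasis (by rwa [hb])
  have hB : ∀ j, B j = v j := by intro j; simp [B, hb]
  have h1 := congrArg WithLp.ofLp (B.sum_repr' (WithLp.toLp 2 x))
  have h2 : ∀ j, (inner ℝ (B j) (WithLp.toLp 2 x : EuclideanSpace ℝ (Fin n)) : ℝ) = u j ⬝ᵥ x := by
    intro j
    rw [hB]
    simp [v, PiLp.inner_apply, RCLike.inner_apply, dotProduct, mul_comm]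
  simp only [WithLp.ofLp_sum, WithLp.ofLp_smul, h2] at h1
  simp only [hB, v, WithLp.ofLp_toLp] at h1
  exact h1.symm

/-- Dot product of two expansions in an orthonormal family. -/
lemma aux_dot (u : Fin n → (Fin n → ℝ))
    (horth : ∀ j k, u j ⬝ᵥ u k = if j = k then (1 : ℝ) else 0)
    (c e : Fin n → ℝ) :
    (∑ j, c j • u j) ⬝ᵥ (∑ k, e k • u k) = ∑ j, c j * e j := by
  simp only [dotProduct, Finset.sum_apply, Pi.smul_apply, smul_eq_mul,
    Finset.sum_mul, Finset.mul_sum]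
  rw [Finset.sum_comm]
  refine Finset.sum_congr rfl fun j _ => ?_
  rw [Finset.sum_comm]
  have h : ∀ y, ∑ x, c y * u y x * (e j * u j x) = c y * e j * (u y ⬝ᵥ u j) := by
    intro y
    show _ = c y * e j * ∑ x, u y x * u j x
    rw [Finset.mul_sum]
    exact Finset.sum_congr rfl fun x _ => by ring
  simp_rw [h, horth, mul_ite, mul_one, mul_zero]
  simp

/-- Sum over unordered pairs, for a symmetric function vanishing on the diagonal. -/
lemma aux_pair (g : Fin n → Fin n → ℝ) (hg : ∀ i j, g i j = g j i)
    (hd : ∀ i, g i i = 0) :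
    ∑ i, ∑ j, (if i < j then g i j else 0) = (∑ i, ∑ j, g i j) / 2 := by
  have key : ∀ i j : Fin n, g i j =
      (if i < j then g i j else 0) + (if j < i then g i j else 0) := by
    intro i j
    rcases lt_trichotomy i j with h | h | h
    · simp [h, h.asymm]
    · subst h; simp [hd, lt_irrefl]
    · simp [h, h.asymm]
  have h2 : ∑ i, ∑ j, (if j < i then g i j else 0)
      = ∑ i, ∑ j, (if i < j then g i j else 0) := by
    rw [Finset.sum_comm]
    exact Finset.sum_congr rfl fun i _ => Finset.sum_congr rfl fun j _ => by
      rw [hg]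
  have h3 : ∑ i, ∑ j, g i j = ∑ i, ∑ j, ((if i < j then g i j else 0) +
      (if j < i then g i j else 0)) := by
    exact Finset.sum_congr rfl fun i _ => Finset.sum_congr rfl fun j _ => key i j
  simp_rw [Finset.sum_add_distrib] at h3
  rw [h3, h2]
  ring

/-- The Laplacian quadratic form. -/
lemma aux_quad (A : Fin n → Fin n → ℝ)
    (hsym : ∀ i i', A i i' = A i' i) (hdiag : ∀ i, A i i = 0)
    (L : Matrix (Fin n) (Fin n) ℝ)
    (hL : ∀ i i', L i i' = if i = i' then ∑ j ∈ Finset.univ.erase i, A i j else -A i i')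
    (x : Fin n → ℝ) :
    x ⬝ᵥ (L *ᵥ x) = ∑ i, ∑ j, (if i < j then A i j * (x i - x j) ^ 2 else 0) := by
  have hLx : ∀ i, (L *ᵥ x) i = ∑ j, A i j * (x i - x j) := by
    intro i
    show ∑ j, L i j * x j = _
    rw [← Finset.add_sum_erase _ (fun j => L i j * x j) (Finset.mem_univ i),
        ← Finset.add_sum_erase _ (fun j => A i j * (x i - x j)) (Finset.mem_univ i)]
    rw [hL, if_pos rfl, hdiag]
    have h1 : ∑ j ∈ Finset.univ.erase i, L i j * x j
        = ∑ j ∈ Finset.univ.erase i, -(A i j * x j) := by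
      refine Finset.sum_congr rfl fun j hj => ?_
      rw [hL, if_neg (Ne.symm (Finset.mem_erase.1 hj).1)]
      ring
    rw [h1, Finset.sum_mul, ← Finset.sum_add_distrib]
    simp only [sub_self, mul_zero, zero_mul, zero_add]
    exact Finset.sum_congr rfl fun j _ => by ring
  have hlhs : x ⬝ᵥ (L *ᵥ x) = ∑ i, ∑ j, A i j * (x i * (x i - x j)) := by
    unfold dotProduct
    refine Finset.sum_congr rfl fun i _ => ?_
    rw [hLx, Finset.mul_sum]
    exact Finset.sum_congr rfl fun j _ => by ring
  rw [aux_pair (fun i j => A i j * (x i - x j) ^ 2)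
      (fun i j => by
        show A i j * (x i - x j) ^ 2 = A j i * (x j - x i) ^ 2
        rw [hsym]; ring)
      (fun i => by show A i i * (x i - x i) ^ 2 = 0; simp [hdiag])]
  have hsplit : ∑ i, ∑ j, A i j * (x i - x j) ^ 2
      = (∑ i, ∑ j, A i j * (x i * (x i - x j)))
        + ∑ i, ∑ j, A i j * (x j * (x j - x i)) := by
    rw [← Finset.sum_add_distrib]
    simp_rw [← Finset.sum_add_distrib]
    exact Finset.sum_congr rfl fun i _ => Finset.sum_congr rfl fun j _ => by ring
  have hswap : ∑ i, ∑ j, A i j * (x j * (x j - x i))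
      = ∑ i, ∑ j, A i j * (x i * (x i - x j)) := by
    rw [Finset.sum_comm]
    exact Finset.sum_congr rfl fun i _ => Finset.sum_congr rfl fun j _ => by
      rw [hsym]
  rw [hlhs]
  rw [hsplit, hswap] at *
  ring

end Aux


/-- Single orthonormal expansion dot. -/
lemma aux_dot_single {n : ℕ} (u : Fin n → (Fin n → ℝ))
    (horth : ∀ j k, u j ⬝ᵥ u k = if j = k then (1 : ℝ) else 0)
    (c : Fin n → ℝ) (k : Fin n) :
    u k ⬝ᵥ (∑ j, c j • u j) = c k := by
  have h : ∀ j, u k ⬝ᵥ (c j • u j) = c j * (u k ⬝ᵥ u j) := by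
    intro j
    rw [dotProduct_smul, smul_eq_mul]
  calc u k ⬝ᵥ (∑ j, c j • u j) = ∑ j, u k ⬝ᵥ (c j • u j) := by
        unfold dotProduct
        rw [Finset.sum_comm]
        refine Finset.sum_congr rfl fun j _ => ?_
        rw [Finset.sum_apply]
        rw [Finset.mul_sum]
      _ = c k := by
        simp_rw [h, horth, mul_ite, mul_one, mul_zero]
        simp

/-- Spectral gap bound for the Laplacian quadratic form. -/
lemma aux_spectral {n : ℕ} (hn : 1 < n) (A : Fin n → Fin n → ℝ)
    (hsym : ∀ i i', A i i' = A i' i) (hnonneg : ∀ i i', 0 ≤ A i i')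
    (hdiag : ∀ i, A i i = 0)
    (L : Matrix (Fin n) (Fin n) ℝ)
    (hL : ∀ i i', L i i' = if i = i' then ∑ j ∈ Finset.univ.erase i, A i j else -A i i')
    (μ : Fin n → ℝ) (u : Fin n → (Fin n → ℝ))
    (hmono : Monotone μ)
    (horth : ∀ j k, u j ⬝ᵥ u k = if j = k then (1 : ℝ) else 0)
    (heig : ∀ j, L *ᵥ u j = μ j • u j)
    (lam₂ : ℝ) (hlam₂ : lam₂ = μ ⟨1, hn⟩) (hlam₂pos : 0 < lam₂)
    (x : Fin n → ℝ) :
    lam₂ * ∑ i, (x i - (n : ℝ)⁻¹ * ∑ j, x j) ^ 2 ≤ x ⬝ᵥ (L *ᵥ x) := by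
  have npos : (0:ℝ) < n := by positivity
  set z : Fin n := ⟨0, by omega⟩ with hz
  set a : Fin n → ℝ := fun j => u j ⬝ᵥ x with ha
  have hx : x = ∑ j, a j • u j := aux_expand (by omega) u horth x
  -- L *ᵥ x in the eigenbasis
  have hmulVec : ∀ c : Fin n → ℝ, L *ᵥ (∑ j, c j • u j) = ∑ j, (μ j * c j) • u j := by
    intro c
    rw [← L.mulVecLin_apply, map_sum]
    refine Finset.sum_congr rfl fun j _ => ?_
    rw [LinearMap.map_smul, Matrix.mulVecLin_apply, heig, smul_smul, mul_comm]
  -- quadratic form in coefficients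
  have hquad : x ⬝ᵥ (L *ᵥ x) = ∑ j, μ j * a j ^ 2 := by
    conv_lhs => rw [hx, hmulVec]
    rw [aux_dot u horth]
    exact Finset.sum_congr rfl fun j _ => by ring
  -- Parseval
  have hpar : ∑ i, x i ^ 2 = ∑ j, a j ^ 2 := by
    have : x ⬝ᵥ x = ∑ j, a j * a j := by
      conv_lhs => rw [hx]
      exact aux_dot u horth a a
    unfold dotProduct at this
    simp_rw [← sq] at this
    exact this
  -- the all-ones vector
  set o : Fin n → ℝ := fun _ => 1 with ho
  set b : Fin n → ℝ := fun j => u j ⬝ᵥ o with hb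
  have hoexp : o = ∑ j, b j • u j := aux_expand (by omega) u horth o
  have hLone : L *ᵥ o = 0 := by
    funext i
    show ∑ j, L i j * o j = 0
    simp only [ho, mul_one]
    rw [← Finset.add_sum_erase _ (fun j => L i j) (Finset.mem_univ i), hL, if_pos rfl]
    have : ∑ j ∈ Finset.univ.erase i, L i j = ∑ j ∈ Finset.univ.erase i, -A i j := by
      refine Finset.sum_congr rfl fun j hj => ?_
      rw [hL, if_neg (Ne.symm (Finset.mem_erase.1 hj).1)]
    rw [this, Finset.sum_neg_distrib]
    ring
  have hbmu : ∀ j, μ j * b j = 0 := by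
    intro j
    have h1 : L *ᵥ o = ∑ k, (μ k * b k) • u k := by rw [hoexp] at hLone ⊢; rw [hmulVec]
    have h2 : u j ⬝ᵥ (L *ᵥ o) = μ j * b j := by rw [h1]; exact aux_dot_single u horth _ j
    rw [hLone] at h2
    simpa using h2.symm
  have hbz : ∀ j, j ≠ z → b j = 0 := by
    intro j hj
    have h1 : (⟨1, hn⟩ : Fin n) ≤ j := by
      rw [Fin.le_def]
      have : (j : ℕ) ≠ 0 := fun h => hj (Fin.ext h)
      show 1 ≤ (j : ℕ)
      omega
    have h2 : 0 < μ j := lt_of_lt_of_le hlam₂pos (hlam₂ ▸ hmono h1)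
    have := hbmu j
    rcases mul_eq_zero.1 this with h | h
    · exact absurd h (ne_of_gt h2)
    · exact h
  have hsumx : ∑ i, x i = b z * a z := by
    have h1 : o ⬝ᵥ x = ∑ j, b j * a j := by
      conv_lhs => rw [hoexp, hx]; exact aux_dot u horth b a
    have h2 : o ⬝ᵥ x = ∑ i, x i := by simp [ho, dotProduct]
    rw [← h2, h1]
    rw [Finset.sum_eq_single z]
    · intro j _ hj; rw [hbz j hj]; ring
    · intro h; exact absurd (Finset.mem_univ z) h
  have hbz2 : b z ^ 2 = n := by
    have h1 : o ⬝ᵥ o = ∑ j, b j * b j := by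
      conv_lhs => rw [hoexp]; exact aux_dot u horth b b
    have h2 : o ⬝ᵥ o = (n : ℝ) := by simp [ho, dotProduct]
    rw [h2] at h1
    rw [Finset.sum_eq_single z] at h1
    · rw [sq]; exact h1.symm
    · intro j _ hj; rw [hbz j hj]; ring
    · intro h; exact absurd (Finset.mem_univ z) h
  -- variance identity
  have hvar : ∑ i, (x i - (n : ℝ)⁻¹ * ∑ j, x j) ^ 2 = ∑ j ∈ Finset.univ.erase z, a j ^ 2 := by
    have hexpand : ∑ i, (x i - (n : ℝ)⁻¹ * ∑ j, x j) ^ 2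
        = ∑ i, x i ^ 2 - (∑ i, x i) ^ 2 / n := by
      have h0 : ∑ i, (x i - (n : ℝ)⁻¹ * ∑ j, x j) ^ 2
          = ∑ i, (x i ^ 2 - 2 * ((n : ℝ)⁻¹ * ∑ j, x j) * x i
            + ((n : ℝ)⁻¹ * ∑ j, x j) ^ 2) := by
        exact Finset.sum_congr rfl fun i _ => by ring
      rw [h0, Finset.sum_add_distrib, Finset.sum_sub_distrib, Finset.sum_const,
        Finset.card_univ, Fintype.card_fin, ← Finset.mul_sum, nsmul_eq_mul]
      field_simp
      ring
    have hsq : (∑ i, x i) ^ 2 / n = a z ^ 2 := by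
      rw [hsumx]
      rw [div_eq_iff (ne_of_gt npos)]
      have : (b z * a z) ^ 2 = b z ^ 2 * a z ^ 2 := by ring
      rw [this, hbz2]
      ring
    rw [hexpand, hsq, hpar]
    rw [← Finset.add_sum_erase _ (fun j => a j ^ 2) (Finset.mem_univ z)]
    ring
  -- nonnegativity of μ z
  have hmuz : 0 ≤ μ z := by
    have h1 : u z ⬝ᵥ (L *ᵥ u z) = μ z := by
      rw [heig, dotProduct_smul, horth, if_pos rfl, smul_eq_mul, mul_one]
    have h2 : 0 ≤ u z ⬝ᵥ (L *ᵥ u z) := by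
      rw [aux_quad A hsym hdiag L hL]
      refine Finset.sum_nonneg fun i _ => Finset.sum_nonneg fun j _ => ?_
      split
      · exact mul_nonneg (hnonneg i j) (sq_nonneg _)
      · exact le_refl 0
    rw [h1] at h2; exact h2
  -- final estimate
  rw [hquad, hvar, Finset.mul_sum]
  rw [← Finset.add_sum_erase _ (fun j => μ j * a j ^ 2) (Finset.mem_univ z)]
  have h1 : ∑ j ∈ Finset.univ.erase z, lam₂ * a j ^ 2
      ≤ ∑ j ∈ Finset.univ.erase z, μ j * a j ^ 2 := by
    refine Finset.sum_le_sum fun j hj => ?_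
    have hj1 : (⟨1, hn⟩ : Fin n) ≤ j := by
      rw [Fin.le_def]
      have : (j : ℕ) ≠ 0 := fun h => (Finset.mem_erase.1 hj).1 (Fin.ext h)
      show 1 ≤ (j : ℕ)
      omega
    exact mul_le_mul_of_nonneg_right (hlam₂ ▸ hmono hj1) (sq_nonneg _)
  have h2 : 0 ≤ μ z * a z ^ 2 := mul_nonneg hmuz (sq_nonneg _)
  linarith

/-- **Single-cluster specialization.** If all nodes form one cluster `C = V`
satisfying `∑_{i∈V} L_i(w̄) ≤ ε` for some `w̄`, and the graph is connected so
that the second smallest eigenvalue `lam₂` of its Laplacian is positive, then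
any minimizer `ŵ` of the GTVMin objective satisfies
`∑_{i∈V} ‖ŵ^(i) − avg‖² ≤ ε / (α · lam₂)` with `avg = (1/n) ∑_i ŵ^(i)`. -/
theorem stmt_7 {n d : ℕ} (hn : 1 < n) (A : Fin n → Fin n → ℝ)
    (hsym : ∀ i i', A i i' = A i' i) (hnonneg : ∀ i i', 0 ≤ A i i')
    (hdiag : ∀ i, A i i = 0)
    (ℒ : Fin n → EuclideanSpace ℝ (Fin d) → ℝ)
    (hℒ : ∀ i x, 0 ≤ ℒ i x)
    (α : ℝ) (hα : 0 < α)
    (f : (Fin n → EuclideanSpace ℝ (Fin d)) → ℝ)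
    (hf : ∀ w, f w = ∑ i, ℒ i (w i) +
      α * ∑ i, ∑ i', if i < i' then A i i' * ‖w i - w i'‖ ^ 2 else 0)
    (what : Fin n → EuclideanSpace ℝ (Fin d))
    (hmin : ∀ w, f what ≤ f w)
    (wbar : EuclideanSpace ℝ (Fin d)) (ε : ℝ)
    (hε : ∑ i, ℒ i wbar ≤ ε)
    -- Laplacian of the (whole) graph:
    (L : Matrix (Fin n) (Fin n) ℝ)
    (hL : ∀ i i', L i i' = if i = i' then ∑ j ∈ Finset.univ.erase i, A i j else -A i i')
    -- eigenvalues `μ` of `L` in nondecreasing order with orthonormal eigenbasis `u`: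
    (μ : Fin n → ℝ) (u : Fin n → (Fin n → ℝ))
    (hmono : Monotone μ)
    (horth : ∀ j k, u j ⬝ᵥ u k = if j = k then (1 : ℝ) else 0)
    (heig : ∀ j, L *ᵥ u j = μ j • u j)
    (lam₂ : ℝ) (hlam₂ : lam₂ = μ ⟨1, hn⟩) (hlam₂pos : 0 < lam₂) :
    ∑ i, ‖what i - (n : ℝ)⁻¹ • ∑ i', what i'‖ ^ 2 ≤ ε / (α * lam₂) := by
  have npos : (0:ℝ) < n := by positivity
  set Q : ℝ := ∑ i, ∑ i', if i < i' then A i i' * ‖what i - what i'‖ ^ 2 else 0 with hQ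
  -- Step 1 : α * Q ≤ ε
  have hQle : α * Q ≤ ε := by
    have h1 : f (fun _ => wbar) = ∑ i, ℒ i wbar := by
      rw [hf]; simp
    have h2 : f what ≤ ε := by
      have := hmin (fun _ => wbar)
      rw [h1] at this
      exact le_trans this hε
    have h3 : α * Q ≤ f what := by
      rw [hf]
      have : 0 ≤ ∑ i, ℒ i (what i) := Finset.sum_nonneg fun i _ => hℒ i _
      linarith
    linarith
  -- coordinates
  set x : Fin d → Fin n → ℝ := fun k i => what i k with hxdef
  have hnormsq : ∀ v : EuclideanSpace ℝ (Fin d), ‖v‖ ^ 2 = ∑ k, v k ^ 2 := by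
    intro v
    have h := real_inner_self_eq_norm_sq v
    rw [PiLp.inner_apply] at h
    simp only [RCLike.inner_apply, conj_trivial] at h
    rw [← h]
    exact Finset.sum_congr rfl fun k _ => (sq (v k)).symm
  have hpoint : ∀ i i' : Fin n, (if i < i' then A i i' * ‖what i - what i'‖ ^ 2 else 0)
      = ∑ k, (if i < i' then A i i' * (x k i - x k i') ^ 2 else (0:ℝ)) := by
    intro i i'
    split
    · rw [hnormsq, Finset.mul_sum]
      exact Finset.sum_congr rfl fun k _ => rfl
    · simp
  -- Step 2 : Q as sum of Laplacian quadratic forms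
  have hQsplit : Q = ∑ k, (x k) ⬝ᵥ (L *ᵥ (x k)) := by
    have h1 : ∀ k : Fin d, (x k) ⬝ᵥ (L *ᵥ (x k))
        = ∑ i, ∑ i', if i < i' then A i i' * (x k i - x k i') ^ 2 else 0 :=
      fun k => aux_quad A hsym hdiag L hL (x k)
    simp_rw [h1]
    rw [hQ]
    simp_rw [hpoint]
    calc ∑ i : Fin n, ∑ i' : Fin n, ∑ k : Fin d,
          (if i < i' then A i i' * (x k i - x k i') ^ 2 else (0:ℝ))
        = ∑ i : Fin n, ∑ k : Fin d, ∑ i' : Fin n,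
          (if i < i' then A i i' * (x k i - x k i') ^ 2 else (0:ℝ)) :=
          Finset.sum_congr rfl fun i _ => Finset.sum_comm
      _ = ∑ k : Fin d, ∑ i : Fin n, ∑ i' : Fin n,
          (if i < i' then A i i' * (x k i - x k i') ^ 2 else (0:ℝ)) :=
          Finset.sum_comm
  -- Step 3 : spectral bound in each coordinate
  have hspec : lam₂ * ∑ k, ∑ i, (x k i - (n:ℝ)⁻¹ * ∑ j, x k j) ^ 2 ≤ Q := by
    rw [hQsplit, Finset.mul_sum]
    exact Finset.sum_le_sum fun k _ =>
      aux_spectral hn A hsym hnonneg hdiag L hL μ u hmono horth heig lam₂ hlam₂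
        hlam₂pos (x k)
  -- Step 4 : identify the deviation from average
  have hsum_apply : ∀ k : Fin d, (∑ i', what i') k = ∑ i', what i' k := by
    intro k
    exact map_sum (EuclideanSpace.proj k (𝕜 := ℝ)) what Finset.univ
  have hcomp : ∀ (i : Fin n) (k : Fin d),
      (what i - (n:ℝ)⁻¹ • ∑ i', what i') k = x k i - (n:ℝ)⁻¹ * ∑ j, x k j := by
    intro i k
    rw [PiLp.sub_apply, PiLp.smul_apply, hsum_apply, smul_eq_mul]
  have hS : ∑ i, ‖what i - (n : ℝ)⁻¹ • ∑ i', what i'‖ ^ 2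
      = ∑ k, ∑ i, (x k i - (n:ℝ)⁻¹ * ∑ j, x k j) ^ 2 := by
    have h1 : ∑ i, ‖what i - (n : ℝ)⁻¹ • ∑ i', what i'‖ ^ 2
        = ∑ i, ∑ k, (x k i - (n:ℝ)⁻¹ * ∑ j, x k j) ^ 2 := by
      refine Finset.sum_congr rfl fun i _ => ?_
      rw [hnormsq]
      exact Finset.sum_congr rfl fun k _ => by rw [hcomp]
    rw [h1, Finset.sum_comm]
  -- Conclusion
  rw [hS]
  rw [le_div_iff₀ (mul_pos hα hlam₂pos)]
  set S := ∑ k, ∑ i, (x k i - (n:ℝ)⁻¹ * ∑ j, x k j) ^ 2 with hSdef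
  have h4 : α * (lam₂ * S) ≤ α * Q := mul_le_mul_of_nonneg_left hspec hα.le
  nlinarith
end
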